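/- Let B > 0, let θ : ℝ → ℝ be continuous, nonnegative, and even with θ(r) = 0 whenever |r| ≥ B, and let f₀ = (1/(2B)) 𝟙_{(−B,B)} be the uniform density on (−B,B). Define ν_θ(a) = μ_θ[f₀; a] for a ∈ ℝ. Then ν_θ is differentiable at every a ∈ (0,B), and its derivative is ν_θ′(a) = (1/(2B²)) ∫₀^B θ(y) G(a,y) dy, where G is the piecewise indicator kernel on (0,B) × ℝ. -/

import Mathlib

open MeasureTheory Set intervalIntegral

/-- The measurement bracket `Ψ_a(x₁,x₂) = 2·𝟙[(x₁+x₂)/2 ≤ a] − 𝟙[x₁ ≤ a] − 𝟙[x₂ ≤ a]`. -/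
noncomputable def Psi (a x₁ x₂ : ℝ) : ℝ :=
  2 * (if (x₁ + x₂) / 2 ≤ a then (1 : ℝ) else 0)
    - (if x₁ ≤ a then (1 : ℝ) else 0) - (if x₂ ≤ a then (1 : ℝ) else 0)

/-- The initial measurement rate `μ_θ[f₀; a]`. -/
noncomputable def mu (θ f₀ : ℝ → ℝ) (a : ℝ) : ℝ :=
  ∫ p : ℝ × ℝ, θ (p.1 - p.2) * f₀ p.1 * f₀ p.2 * Psi a p.1 p.2

/-- The uniform density on `(-B, B)`. -/
noncomputable def uniformDensity (B x : ℝ) : ℝ :=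
  (1 / (2 * B)) * (Set.Ioo (-B) B).indicator 1 x

/-- The piecewise indicator kernel `G` on `(0,B) × ℝ`. -/
noncomputable def Gker (B a y : ℝ) : ℝ :=
  if a ≤ B / 2 then (Set.Ioo (B - a) B).indicator 1 y
  else (Set.Ioo (B - a) (2 * (B - a))).indicator 1 y
    - (Set.Ioo (2 * (B - a)) B).indicator 1 y

/-! ### Primitive helpers -/

noncomputable def Prim (θ : ℝ → ℝ) (t : ℝ) : ℝ := ∫ y in (0:ℝ)..t, θ y

lemma prim_cont {θ : ℝ → ℝ} (hθc : Continuous θ) : Continuous (Prim θ) :=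
  intervalIntegral.continuous_primitive (fun a b => hθc.intervalIntegrable a b) 0

lemma prim_hasDerivAt {θ : ℝ → ℝ} (hθc : Continuous θ) (t : ℝ) :
    HasDerivAt (Prim θ) (θ t) t :=
  (hθc.integral_hasStrictDerivAt 0 t).hasDerivAt

lemma integral_eq_prim {θ : ℝ → ℝ} (hθc : Continuous θ) (u v : ℝ) :
    ∫ y in u..v, θ y = Prim θ v - Prim θ u := by
  rw [Prim, Prim, ← intervalIntegral.integral_interval_sub_left
    (hθc.intervalIntegrable 0 v) (hθc.intervalIntegrable 0 u)]

lemma prim_neg {θ : ℝ → ℝ} (hθe : ∀ r, θ (-r) = θ r) (t : ℝ) : Prim θ (-t) = - Prim θ t := by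
  have h1 : ∫ y in (-t)..(0:ℝ), θ y = Prim θ t := by
    have := intervalIntegral.integral_comp_neg (a := (0:ℝ)) (b := t) θ
    rw [neg_zero] at this
    rw [← this, Prim]
    exact intervalIntegral.integral_congr fun x _ => hθe x
  rw [Prim, intervalIntegral.integral_symm, h1]

lemma prim2_neg {θ : ℝ → ℝ} (hθc : Continuous θ) (hθe : ∀ r, θ (-r) = θ r) (t : ℝ) :
    Prim (Prim θ) (-t) = Prim (Prim θ) t := by
  have h1 : ∫ y in (-t)..(0:ℝ), Prim θ y = - Prim (Prim θ) t := by
    have := intervalIntegral.integral_comp_neg (a := (0:ℝ)) (b := t) (Prim θ)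
    rw [neg_zero] at this
    rw [← this, Prim, ← intervalIntegral.integral_neg]
    exact intervalIntegral.integral_congr fun x _ => prim_neg hθe x
  rw [Prim, intervalIntegral.integral_symm, h1, neg_neg]

lemma prim_supp {θ : ℝ → ℝ} {B : ℝ} (hθc : Continuous θ)
    (hθsupp : ∀ r : ℝ, B ≤ |r| → θ r = 0) {t : ℝ} (ht : B ≤ t) :
    Prim θ t = Prim θ B := by
  have h0 : ∫ y in B..t, θ y = 0 := by
    rw [show (0:ℝ) = ∫ y in B..t, (0:ℝ) by simp]
    refine intervalIntegral.integral_congr fun x hx => ?_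
    rw [Set.uIcc_of_le ht] at hx
    exact hθsupp x (le_trans hx.1 (le_abs_self x))
  have := intervalIntegral.integral_add_adjacent_intervals
    (μ := volume) (f := θ) (a := 0) (b := B) (c := t)
    (hθc.intervalIntegrable 0 B) (hθc.intervalIntegrable B t)
  rw [Prim, Prim, ← this, h0, add_zero]

/-! ### Integrability and truncation helpers -/

lemma II_ite {h : ℝ → ℝ} (hc : Continuous h) (c L R : ℝ) :
    IntervalIntegrable (fun x => h x * (if x ≤ c then (1:ℝ) else 0)) volume L R := by
  have heq : (fun x => h x * (if x ≤ c then (1:ℝ) else 0)) = (Set.Iic c).indicator h := by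
    funext x; by_cases hx : x ≤ c <;> simp [Set.indicator_apply, hx]
  rw [heq]
  exact ⟨(hc.intervalIntegrable L R).1.indicator measurableSet_Iic,
    (hc.intervalIntegrable L R).2.indicator measurableSet_Iic⟩

lemma trunc {h : ℝ → ℝ} (hc : Continuous h) {L R c : ℝ} (hLR : L ≤ R) (hLc : L ≤ c) :
    ∫ x in L..R, h x * (if x ≤ c then (1:ℝ) else 0) = ∫ x in L..(min c R), h x := by
  rcases le_total R c with hRc | hcR
  · rw [min_eq_right hRc]
    refine intervalIntegral.integral_congr fun x hx => ?_
    rw [Set.uIcc_of_le hLR] at hx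
    rw [if_pos (le_trans hx.2 hRc), mul_one]
  · rw [min_eq_left hcR]
    have hsplit := intervalIntegral.integral_add_adjacent_intervals
      (μ := volume) (f := fun x => h x * (if x ≤ c then (1:ℝ) else 0))
      (a := L) (b := c) (c := R) (II_ite hc c L c) (II_ite hc c c R)
    have h2 : ∫ x in c..R, h x * (if x ≤ c then (1:ℝ) else 0) = 0 := by
      have : ∫ x in c..R, h x * (if x ≤ c then (1:ℝ) else 0) = ∫ x in c..R, (0:ℝ) := by
        refine intervalIntegral.integral_congr_ae ?_
        filter_upwards with x hx
        rw [Set.uIoc_of_le hcR] at hx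
        rw [if_neg (not_le.2 hx.1), mul_zero]
      simpa using this
    have h1 : ∫ x in L..c, h x * (if x ≤ c then (1:ℝ) else 0) = ∫ x in L..c, h x := by
      refine intervalIntegral.integral_congr fun x hx => ?_
      rw [Set.uIcc_of_le hLc] at hx
      rw [if_pos hx.2, mul_one]
    rw [← hsplit, h1, h2, add_zero]

lemma key_ind {θ : ℝ → ℝ} (hθc : Continuous θ) {B c d : ℝ}
    (hB : 0 ≤ B) (h0 : 0 ≤ c) (hcd : c ≤ d) (hdB : d ≤ B) :
    ∫ y in (0:ℝ)..B, θ y * (Set.Ioo c d).indicator 1 y = Prim θ d - Prim θ c := by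
  have heq : ∀ y, θ y * (Set.Ioo c d).indicator 1 y = (Set.Ioo c d).indicator θ y := by
    intro y; by_cases hy : y ∈ Set.Ioo c d <;> simp [Set.indicator_apply, hy]
  simp_rw [heq]
  rw [intervalIntegral.integral_of_le hB, ← MeasureTheory.integral_indicator measurableSet_Ioc,
    Set.indicator_indicator]
  have hset : Set.Ioc 0 B ∩ Set.Ioo c d = Set.Ioo c d := by
    apply Set.inter_eq_self_of_subset_right
    intro y hy
    exact ⟨lt_of_le_of_lt h0 hy.1, le_trans hy.2.le hdB⟩
  rw [hset, MeasureTheory.integral_indicator measurableSet_Ioo,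
    ← MeasureTheory.integral_Ioc_eq_integral_Ioo, ← intervalIntegral.integral_of_le hcd,
    integral_eq_prim hθc]

/-! ### The truncated convolution integral -/

lemma Kval {θ : ℝ → ℝ} (hθc : Continuous θ) {B x c : ℝ} (hB : 0 < B) (hc : -B ≤ c) :
    ∫ y in (-B)..B, θ (x - y) * (if y ≤ c then (1:ℝ) else 0)
      = Prim θ (x + B) - Prim θ (x - min c B) := by
  rw [trunc (h := fun y => θ (x - y)) (by fun_prop) (by linarith) hc,
    intervalIntegral.integral_comp_sub_left θ x, integral_eq_prim hθc, sub_neg_eq_add]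

/-! ### Inner integral -/

lemma inner_val {θ : ℝ → ℝ} {B a x : ℝ} (hθc : Continuous θ) (hB : 0 < B)
    (ha : a ∈ Set.Ioo (0:ℝ) B) (hx : x ∈ Set.Ioo (-B) B) :
    ∫ y : ℝ, θ (x - y) * uniformDensity B y * Psi a x y
      = (1/(2*B)) * (2*(Prim θ (x+B) - Prim θ (max (2*x-2*a) (x-B)))
          - (Prim θ (x+B) - Prim θ (x-B)) * (if x ≤ a then (1:ℝ) else 0)
          - (Prim θ (x+B) - Prim θ (x-a))) := by
  have hpt : ∀ y, θ (x - y) * uniformDensity B y * Psi a x y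
      = (1/(2*B)) * (Set.Ioo (-B) B).indicator (fun y => θ (x-y) * Psi a x y) y := by
    intro y
    by_cases hy : y ∈ Set.Ioo (-B) B <;>
      simp [uniformDensity, Set.indicator_apply, hy] <;> ring
  simp_rw [hpt]
  rw [MeasureTheory.integral_const_mul, MeasureTheory.integral_indicator measurableSet_Ioo,
    ← MeasureTheory.integral_Ioc_eq_integral_Ioo,
    ← intervalIntegral.integral_of_le (by linarith : -B ≤ B)]
  congr 1
  have hcong : ∫ y in (-B)..B, θ (x-y) * Psi a x y
      = ∫ y in (-B)..B, (2*(θ (x-y) * (if y ≤ 2*a - x then (1:ℝ) else 0))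
          - θ (x-y) * (if x ≤ a then (1:ℝ) else 0)
          - θ (x-y) * (if y ≤ a then (1:ℝ) else 0)) := by
    refine intervalIntegral.integral_congr fun y _ => ?_
    have h2 : (if (x + y) / 2 ≤ a then (1:ℝ) else 0) = (if y ≤ 2*a - x then (1:ℝ) else 0) := by
      rcases le_or_gt y (2*a - x) with h | h
      · rw [if_pos h, if_pos (by linarith)]
      · rw [if_neg (by intro h'; linarith), if_neg (not_le.2 h)]
    rw [Psi, h2]; ring
  rw [hcong]
  have i1 : IntervalIntegrable (fun y => θ (x-y) * (if y ≤ 2*a - x then (1:ℝ) else 0))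
      volume (-B) B := II_ite (by fun_prop) _ _ _
  have i2 : IntervalIntegrable (fun y => θ (x-y) * (if x ≤ a then (1:ℝ) else 0))
      volume (-B) B := (Continuous.mul (by fun_prop) continuous_const).intervalIntegrable _ _
  have i3 : IntervalIntegrable (fun y => θ (x-y) * (if y ≤ a then (1:ℝ) else 0))
      volume (-B) B := II_ite (by fun_prop) _ _ _
  rw [intervalIntegral.integral_sub ((i1.const_mul 2).sub i2) i3,
    intervalIntegral.integral_sub (i1.const_mul 2) i2,
    intervalIntegral.integral_const_mul]
  have k1 := Kval hθc (x := x) (c := 2*a - x) hB (by rcases ha with ⟨h1,_⟩; rcases hx with ⟨_,h2⟩; linarith)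
  have k3 := Kval hθc (x := x) (c := a) hB (by rcases ha with ⟨h1,_⟩; linarith)
  have hmin1 : x - min (2*a - x) B = max (2*x - 2*a) (x - B) := by
    rcases le_total (2*a - x) B with h | h
    · rw [min_eq_left h, max_eq_left (by linarith)]; ring
    · rw [min_eq_right h, max_eq_right (by linarith)]
  have hmin3 : min a B = a := min_eq_left ha.2.le
  rw [k1, k3, hmin1, hmin3]
  have k2 : ∫ y in (-B)..B, θ (x-y) * (if x ≤ a then (1:ℝ) else 0)
      = (Prim θ (x+B) - Prim θ (x-B)) * (if x ≤ a then (1:ℝ) else 0) := by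
    rw [intervalIntegral.integral_mul_const, intervalIntegral.integral_comp_sub_left θ x,
      integral_eq_prim hθc, sub_neg_eq_add]
  rw [k2]
  try ring

/-! ### Outer integral -/

lemma outer_val {θ : ℝ → ℝ} {B a : ℝ} (hθc : Continuous θ) (hθe : ∀ r, θ (-r) = θ r)
    (hB : 0 < B) (ha : a ∈ Set.Ioo (0:ℝ) B) :
    ∫ x in (-B)..B, (2*(Prim θ (x+B) - Prim θ (max (2*x-2*a) (x-B)))
        - (Prim θ (x+B) - Prim θ (x-B)) * (if x ≤ a then (1:ℝ) else 0)
        - (Prim θ (x+B) - Prim θ (x-a)))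
      = 2*(Prim (Prim θ) (2*B) - Prim (Prim θ) (2*(B-a)) - Prim (Prim θ) (B+a)
          + Prim (Prim θ) (B-a)) := by
  obtain ⟨ha0, haB⟩ := ha
  have hP : Continuous (Prim θ) := prim_cont hθc
  have hQ0 : Prim (Prim θ) 0 = 0 := intervalIntegral.integral_same
  have hQe : ∀ t, Prim (Prim θ) (-t) = Prim (Prim θ) t := prim2_neg hθc hθe
  -- atomic integrals
  have hI1 : ∫ x in (-B)..B, Prim θ (x+B) = Prim (Prim θ) (2*B) := by
    rw [intervalIntegral.integral_comp_add_right (Prim θ) B, integral_eq_prim hP,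
      show -B + B = (0:ℝ) by ring, show B + B = 2*B by ring, hQ0, sub_zero]
  have hI4 : ∫ x in (-B)..B, Prim θ (x-a)
      = Prim (Prim θ) (B-a) - Prim (Prim θ) (B+a) := by
    rw [intervalIntegral.integral_comp_sub_right (Prim θ) a, integral_eq_prim hP,
      show -B - a = -(B+a) by ring, hQe]
  have hI3 : ∫ x in (-B)..B, (Prim θ (x+B) - Prim θ (x-B)) * (if x ≤ a then (1:ℝ) else 0)
      = Prim (Prim θ) (B+a) - (Prim (Prim θ) (B-a) - Prim (Prim θ) (2*B)) := by
    rw [trunc (h := fun x => Prim θ (x+B) - Prim θ (x-B)) (by fun_prop) (by linarith)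
        (by linarith), min_eq_left haB.le,
      intervalIntegral.integral_sub ((by fun_prop : Continuous fun x => Prim θ (x+B)).intervalIntegrable _ _)
        ((by fun_prop : Continuous fun x => Prim θ (x-B)).intervalIntegrable _ _),
      intervalIntegral.integral_comp_add_right (Prim θ) B,
      intervalIntegral.integral_comp_sub_right (Prim θ) B,
      integral_eq_prim hP, integral_eq_prim hP,
      show -B + B = (0:ℝ) by ring, hQ0, sub_zero,
      show -B - B = -(2*B) by ring, hQe, show a - B = -(B-a) by ring, hQe, add_comm a B]
  have hI2 : ∫ x in (-B)..B, Prim θ (max (2*x-2*a) (x-B))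
      = Prim (Prim θ) (2*(B-a)) - Prim (Prim θ) (2*B) := by
    have hcontm : Continuous fun x => Prim θ (max (2*x-2*a) (x-B)) :=
      hP.comp ((continuous_const.mul continuous_id |>.sub continuous_const).max
        (continuous_id.sub continuous_const))
    have hsplit := intervalIntegral.integral_add_adjacent_intervals (μ := volume)
      (f := fun x => Prim θ (max (2*x-2*a) (x-B))) (a := -B) (b := 2*a-B) (c := B)
      (hcontm.intervalIntegrable _ _) (hcontm.intervalIntegrable _ _)
    have hs1 : ∫ x in (-B)..(2*a-B), Prim θ (max (2*x-2*a) (x-B))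
        = Prim (Prim θ) (2*(B-a)) - Prim (Prim θ) (2*B) := by
      have : ∫ x in (-B)..(2*a-B), Prim θ (max (2*x-2*a) (x-B))
          = ∫ x in (-B)..(2*a-B), Prim θ (x-B) := by
        refine intervalIntegral.integral_congr fun x hx => ?_
        rw [Set.uIcc_of_le (by linarith) ] at hx
        rw [max_eq_right (by linarith [hx.2])]
      rw [this, intervalIntegral.integral_comp_sub_right (Prim θ) B, integral_eq_prim hP,
        show 2*a - B - B = -(2*(B-a)) by ring, hQe, show -B - B = -(2*B) by ring, hQe]
    have hs2 : ∫ x in (2*a-B)..B, Prim θ (max (2*x-2*a) (x-B)) = 0 := by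
      have : ∫ x in (2*a-B)..B, Prim θ (max (2*x-2*a) (x-B))
          = ∫ x in (2*a-B)..B, Prim θ (2*x-2*a) := by
        refine intervalIntegral.integral_congr fun x hx => ?_
        rw [Set.uIcc_of_le (by linarith)] at hx
        rw [max_eq_left (by linarith [hx.1])]
      rw [this, intervalIntegral.integral_comp_mul_sub (Prim θ) two_ne_zero (2*a),
        integral_eq_prim hP, show 2*(2*a-B) - 2*a = -(2*B-2*a) by ring, hQe,
        show 2*B - 2*a = 2*(B-a) by ring]
      simp
    rw [← hsplit, hs1, hs2, add_zero]
  -- split the full integral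
  have iA : IntervalIntegrable
      (fun x => 2*(Prim θ (x+B) - Prim θ (max (2*x-2*a) (x-B)))) volume (-B) B := by
    apply Continuous.intervalIntegrable; fun_prop
  have iB : IntervalIntegrable
      (fun x => (Prim θ (x+B) - Prim θ (x-B)) * (if x ≤ a then (1:ℝ) else 0)) volume (-B) B :=
    II_ite (by fun_prop) _ _ _
  have iC : IntervalIntegrable
      (fun x => Prim θ (x+B) - Prim θ (x-a)) volume (-B) B := by
    apply Continuous.intervalIntegrable; fun_prop
  rw [intervalIntegral.integral_sub (iA.sub iB) iC, intervalIntegral.integral_sub iA iB,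
    intervalIntegral.integral_const_mul,
    intervalIntegral.integral_sub
      ((by fun_prop : Continuous fun x => Prim θ (x+B)).intervalIntegrable _ _)
      ((by fun_prop : Continuous fun x => Prim θ (max (2*x-2*a) (x-B))).intervalIntegrable _ _),
    intervalIntegral.integral_sub
      ((by fun_prop : Continuous fun x => Prim θ (x+B)).intervalIntegrable _ _)
      ((by fun_prop : Continuous fun x => Prim θ (x-a)).intervalIntegrable _ _),
    hI1, hI2, hI3, hI4]
  ring

/-! ### Global bound on θ and integrability on the plane -/

lemma theta_bound {θ : ℝ → ℝ} {B : ℝ} (hθc : Continuous θ) (hB : 0 < B)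
    (hθsupp : ∀ r : ℝ, B ≤ |r| → θ r = 0) : ∃ C : ℝ, 0 ≤ C ∧ ∀ r, |θ r| ≤ C := by
  obtain ⟨z, hz, hmax⟩ := isCompact_Icc.exists_isMaxOn
    (Set.nonempty_Icc.2 (by linarith : -B ≤ B))
    (continuous_abs.comp hθc).continuousOn
  refine ⟨|θ z|, abs_nonneg _, fun r => ?_⟩
  by_cases hr : r ∈ Set.Icc (-B) B
  · exact hmax hr
  · have hr' : r < -B ∨ B < r := by
      by_contra hcon
      push_neg at hcon
      exact hr ⟨hcon.1, hcon.2⟩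
    have : B ≤ |r| := by
      rcases hr' with h | h
      · rw [abs_of_nonpos (by linarith)]; linarith
      · rw [abs_of_nonneg (by linarith)]; linarith
    rw [hθsupp r this, abs_zero]
    exact abs_nonneg _

lemma psi_bound (a x y : ℝ) : |Psi a x y| ≤ 4 := by
  unfold Psi; split_ifs <;> norm_num

lemma ud_bound {B : ℝ} (hB : 0 < B) (y : ℝ) : |uniformDensity B y| ≤ 1/(2*B) := by
  unfold uniformDensity
  rw [abs_mul, abs_of_nonneg (by positivity : (0:ℝ) ≤ 1/(2*B))]
  have : |(Set.Ioo (-B) B).indicator (1 : ℝ → ℝ) y| ≤ 1 := by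
    by_cases hy : y ∈ Set.Ioo (-B) B <;> simp [Set.indicator_apply, hy]
  calc 1/(2*B) * |(Set.Ioo (-B) B).indicator (1 : ℝ → ℝ) y| ≤ 1/(2*B) * 1 := by
        exact mul_le_mul_of_nonneg_left this (by positivity)
    _ = 1/(2*B) := mul_one _

lemma F_integrable {θ : ℝ → ℝ} {B a : ℝ} (hθc : Continuous θ) (hB : 0 < B)
    (hθsupp : ∀ r : ℝ, B ≤ |r| → θ r = 0) :
    Integrable (fun p : ℝ × ℝ =>
      θ (p.1 - p.2) * uniformDensity B p.1 * uniformDensity B p.2 * Psi a p.1 p.2) := by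
  obtain ⟨C, hC0, hC⟩ := theta_bound hθc hB hθsupp
  have hmU : Measurable (uniformDensity B) :=
    measurable_const.mul (measurable_one.indicator measurableSet_Ioo)
  have hmPsi : Measurable (fun p : ℝ × ℝ => Psi a p.1 p.2) := by
    unfold Psi
    refine Measurable.sub (Measurable.sub ?_ ?_) ?_
    · exact measurable_const.mul (Measurable.ite
        (measurableSet_le ((measurable_fst.add measurable_snd).div_const 2) measurable_const)
        measurable_const measurable_const)
    · exact Measurable.ite (measurableSet_le measurable_fst measurable_const)
        measurable_const measurable_const
    · exact Measurable.ite (measurableSet_le measurable_snd measurable_const)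
        measurable_const measurable_const
  have hmF : AEStronglyMeasurable (fun p : ℝ × ℝ =>
      θ (p.1 - p.2) * uniformDensity B p.1 * uniformDensity B p.2 * Psi a p.1 p.2) volume :=
    ((((hθc.measurable).comp (measurable_fst.sub measurable_snd)).mul
      (hmU.comp measurable_fst)).mul (hmU.comp measurable_snd)).mul hmPsi
      |>.aestronglyMeasurable
  set S : Set ℝ := Set.Ioo (-B) B with hS
  refine MeasureTheory.Integrable.mono'
    (g := (S ×ˢ S).indicator (fun _ => 1/(2*B) * (1/(2*B)) * (4*C))) ?_ hmF ?_
  · rw [integrable_indicator_iff (measurableSet_Ioo.prod measurableSet_Ioo)]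
    refine integrableOn_const (ne_of_lt ?_)
    rw [MeasureTheory.Measure.volume_eq_prod, MeasureTheory.Measure.prod_prod]
    exact ENNReal.mul_lt_top measure_Ioo_lt_top measure_Ioo_lt_top
  · filter_upwards with p
    by_cases hp : p ∈ S ×ˢ S
    · rw [Set.indicator_of_mem hp]
      rw [Real.norm_eq_abs, abs_mul, abs_mul, abs_mul]
      calc |θ (p.1 - p.2)| * |uniformDensity B p.1| * |uniformDensity B p.2| * |Psi a p.1 p.2|
          ≤ C * (1/(2*B)) * (1/(2*B)) * 4 := by
            have h1 := hC (p.1 - p.2)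
            have h2 := ud_bound hB p.1
            have h3 := ud_bound hB p.2
            have h4 := psi_bound a p.1 p.2
            have n1 : (0:ℝ) ≤ |θ (p.1 - p.2)| := abs_nonneg _
            have n2 : (0:ℝ) ≤ |uniformDensity B p.1| := abs_nonneg _
            have n3 : (0:ℝ) ≤ |uniformDensity B p.2| := abs_nonneg _
            have n4 : (0:ℝ) ≤ |Psi a p.1 p.2| := abs_nonneg _
            have hb : (0:ℝ) ≤ 1/(2*B) := by positivity
            exact mul_le_mul (mul_le_mul (mul_le_mul h1 h2 n2 hC0) h3 n3 (by positivity))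
              h4 n4 (by positivity)
        _ = 1/(2*B) * (1/(2*B)) * (4*C) := by ring
    · rw [Set.indicator_of_notMem hp]
      have : θ (p.1 - p.2) * uniformDensity B p.1 * uniformDensity B p.2 * Psi a p.1 p.2 = 0 := by
        rcases not_and_or.1 (by simpa [Set.mem_prod] using hp) with h | h
        · simp [uniformDensity, Set.indicator_of_notMem (show p.1 ∉ Set.Ioo (-B) B from h)]
        · simp [uniformDensity, Set.indicator_of_notMem (show p.2 ∉ Set.Ioo (-B) B from h)]
      rw [this, norm_zero]

/-! ### The value of `mu` -/

lemma mu_eq {θ : ℝ → ℝ} {B a : ℝ} (hθc : Continuous θ) (hθe : ∀ r, θ (-r) = θ r)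
    (hθsupp : ∀ r : ℝ, B ≤ |r| → θ r = 0) (hB : 0 < B) (ha : a ∈ Set.Ioo (0:ℝ) B) :
    mu θ (uniformDensity B) a
      = (1/(2*B^2)) * (Prim (Prim θ) (2*B) - Prim (Prim θ) (2*(B-a))
          - Prim (Prim θ) (B+a) + Prim (Prim θ) (B-a)) := by
  have hInt := F_integrable (a := a) hθc hB hθsupp
  rw [mu, MeasureTheory.Measure.volume_eq_prod, MeasureTheory.integral_prod _ hInt]
  have step1 : ∀ x : ℝ, (∫ y, θ (x - y) * uniformDensity B x * uniformDensity B y * Psi a x y)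
      = uniformDensity B x * ∫ y, θ (x - y) * uniformDensity B y * Psi a x y := by
    intro x
    rw [← MeasureTheory.integral_const_mul]
    congr 1; funext y; ring
  simp only
  simp_rw [step1]
  have step2 : ∀ x : ℝ, uniformDensity B x
        * (∫ y, θ (x - y) * uniformDensity B y * Psi a x y)
      = (1/(2*B)) * (Set.Ioo (-B) B).indicator
          (fun x => ∫ y, θ (x - y) * uniformDensity B y * Psi a x y) x := by
    intro x
    by_cases hx : x ∈ Set.Ioo (-B) B <;>
      simp [uniformDensity, Set.indicator_apply, hx]
  simp_rw [step2]
  rw [MeasureTheory.integral_const_mul, MeasureTheory.integral_indicator measurableSet_Ioo]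
  rw [MeasureTheory.setIntegral_congr_fun measurableSet_Ioo
    (fun x hx => inner_val hθc hB ha hx)]
  rw [← MeasureTheory.integral_Ioc_eq_integral_Ioo,
    ← intervalIntegral.integral_of_le (by linarith : -B ≤ B),
    intervalIntegral.integral_const_mul, outer_val hθc hθe hB ha]
  field_simp

/-! ### Main theorem -/

lemma II_ind {θ : ℝ → ℝ} (hθc : Continuous θ) (c d L R : ℝ) :
    IntervalIntegrable (fun y => θ y * (Set.Ioo c d).indicator 1 y) volume L R := by
  have heq : (fun y => θ y * (Set.Ioo c d).indicator 1 y) = (Set.Ioo c d).indicator θ := by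
    funext y; by_cases hy : y ∈ Set.Ioo c d <;> simp [Set.indicator_apply, hy]
  rw [heq]
  exact ⟨(hθc.intervalIntegrable L R).1.indicator measurableSet_Ioo,
    (hθc.intervalIntegrable L R).2.indicator measurableSet_Ioo⟩

theorem stmt9 (B : ℝ) (hB : 0 < B) (θ : ℝ → ℝ)
    (hθc : Continuous θ) (hθnn : ∀ r, 0 ≤ θ r) (hθe : ∀ r, θ (-r) = θ r)
    (hθsupp : ∀ r : ℝ, B ≤ |r| → θ r = 0) :
    ∀ a ∈ Set.Ioo (0:ℝ) B,
      HasDerivAt (fun a' => mu θ (uniformDensity B) a')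
        ((1 / (2 * B ^ 2)) * ∫ y in (0:ℝ)..B, θ y * Gker B a y) a := by
  intro a ha
  obtain ⟨ha0, haB⟩ := ha
  have hQd : HasDerivAt (fun a' => (1/(2*B^2)) * (Prim (Prim θ) (2*B)
        - Prim (Prim θ) (2*(B-a')) - Prim (Prim θ) (B+a') + Prim (Prim θ) (B-a')))
      ((1/(2*B^2)) * (2*Prim θ (2*(B-a)) - Prim θ (B+a) - Prim θ (B-a))) a := by
    have hinner1 : HasDerivAt (fun a' : ℝ => 2*(B-a')) (-2) a := by
      simpa using ((hasDerivAt_id a).const_sub B).const_mul 2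
    have hinner2 : HasDerivAt (fun a' : ℝ => B+a') 1 a := by
      simpa using (hasDerivAt_id a).const_add B
    have hinner3 : HasDerivAt (fun a' : ℝ => B-a') (-1) a := by
      simpa using (hasDerivAt_id a).const_sub B
    have h1 := (prim_hasDerivAt (prim_cont hθc) (2*(B-a))).comp a hinner1
    have h2 := (prim_hasDerivAt (prim_cont hθc) (B+a)).comp a hinner2
    have h3 := (prim_hasDerivAt (prim_cont hθc) (B-a)).comp a hinner3
    simp only [Function.comp_def] at h1 h2 h3
    have := ((((hasDerivAt_const a (Prim (Prim θ) (2*B))).sub h1).sub h2).add h3).const_mul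
      (1/(2*B^2))
    exact this.congr_deriv (by ring)
  have hev : (fun a' => mu θ (uniformDensity B) a')
      =ᶠ[nhds a] (fun a' => (1/(2*B^2)) * (Prim (Prim θ) (2*B)
        - Prim (Prim θ) (2*(B-a')) - Prim (Prim θ) (B+a') + Prim (Prim θ) (B-a'))) := by
    filter_upwards [Ioo_mem_nhds ha0 haB] with b hb using mu_eq hθc hθe hθsupp hB hb
  have hD := hQd.congr_of_eventuallyEq hev
  have hPBa : Prim θ (B+a) = Prim θ B := prim_supp hθc hθsupp (by linarith)
  have hval : (1/(2*B^2)) * (2*Prim θ (2*(B-a)) - Prim θ (B+a) - Prim θ (B-a))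
      = (1 / (2 * B ^ 2)) * ∫ y in (0:ℝ)..B, θ y * Gker B a y := by
    by_cases hcase : a ≤ B/2
    · have hk := key_ind hθc (B := B) (c := B - a) (d := B) hB.le (by linarith) (by linarith)
        le_rfl
      have h2B : Prim θ (2*(B-a)) = Prim θ B := prim_supp hθc hθsupp (by linarith)
      simp only [Gker, if_pos hcase]
      rw [hk, hPBa, h2B]
      ring
    · push_neg at hcase
      have hpt : ∀ y, θ y * Gker B a y
          = θ y * (Set.Ioo (B-a) (2*(B-a))).indicator 1 y
            - θ y * (Set.Ioo (2*(B-a)) B).indicator 1 y := by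
        intro y; rw [Gker, if_neg (not_le.2 hcase)]; ring
      rw [intervalIntegral.integral_congr (fun y _ => hpt y),
        intervalIntegral.integral_sub (II_ind hθc _ _ _ _) (II_ind hθc _ _ _ _),
        key_ind hθc (B := B) (c := B - a) (d := 2*(B-a)) hB.le (by linarith) (by linarith)
          (by linarith),
        key_ind hθc (B := B) (c := 2*(B-a)) (d := B) hB.le (by linarith) (by linarith) le_rfl,
        hPBa]
      ring
  rw [← hval]
  exact hD
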